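/- Let F be a finite field, let k, d ≥ 1, and let ε ≥ 0. Let w : F^k → F^d be any function. If, for independent uniformly random a, b ∈ F^k, Pr[w(a) + w(b) = w(a+b)] ≥ 1 − ε, then there exists an additive function w* : F^k → F^d (i.e., w*(a+b) = w*(a) + w*(b) for all a, b ∈ F^k) such that the fraction of points b ∈ F^k with w(b) ≠ w*(b) is at most 6ε. -/

import Mathlib

open scoped Classical

/-- The probability that a uniformly random element of a finite type `Ω`
satisfies the predicate `P`. -/
noncomputable def prob {Ω : Type*} [Fintype Ω] (P : Ω → Prop) : ℝ :=
  ((Finset.univ.filter P).card : ℝ) / (Fintype.card Ω : ℝ)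

/-- Relative (Hamming) distance between two functions on a finite domain. -/
noncomputable def rdist {A B : Type*} [Fintype A] (f g : A → B) : ℝ :=
  prob (fun a => f a ≠ g a)

section ProbLemmas
variable {Ω : Type*} [Fintype Ω]

lemma prob_nonneg (P : Ω → Prop) : 0 ≤ prob P := by
  unfold prob; positivity

private lemma div_le_div_card {a b : ℕ} (h : a ≤ b) (c : ℕ) :
    (a : ℝ) / c ≤ (b : ℝ) / c :=
  div_le_div_of_nonneg_right (by exact_mod_cast h) (Nat.cast_nonneg c)

lemma prob_le_one (P : Ω → Prop) : prob P ≤ 1 := by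
  unfold prob
  rcases isEmpty_or_nonempty Ω with h | h
  · simp
  · rw [div_le_one (by exact_mod_cast Fintype.card_pos)]
    exact_mod_cast Finset.card_filter_le _ _

lemma prob_mono {P Q : Ω → Prop} (h : ∀ x, P x → Q x) : prob P ≤ prob Q :=
  div_le_div_card (Finset.card_le_card (Finset.monotone_filter_right _ (fun x _ => h x))) _

lemma prob_compl [Nonempty Ω] (P : Ω → Prop) : prob (fun x => ¬ P x) = 1 - prob P := by
  unfold prob
  have hN : (0:ℝ) < Fintype.card Ω := by exact_mod_cast Fintype.card_pos
  rw [eq_sub_iff_add_eq, ← add_div, div_eq_one_iff_eq hN.ne']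
  norm_cast
  rw [add_comm]
  convert Finset.card_filter_add_card_filter_not (s := (Finset.univ : Finset Ω)) (p := P) using 3
  exact Finset.filter_congr_decidable _ _ _
  exact Finset.card_univ.symm

lemma prob_union_le (P Q : Ω → Prop) :
    prob (fun x => P x ∨ Q x) ≤ prob P + prob Q := by
  unfold prob
  rw [← add_div, ← Nat.cast_add]
  apply div_le_div_card
  refine (Finset.card_le_card ?_).trans (Finset.card_union_le (Finset.univ.filter P) (Finset.univ.filter Q))
  intro x hx
  simp only [Finset.mem_filter, Finset.mem_union, Finset.mem_univ, true_and] at *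
  exact hx

lemma prob_equiv {Ω' : Type*} [Fintype Ω'] (e : Ω ≃ Ω') (P : Ω' → Prop) :
    prob (fun x => P (e x)) = prob P := by
  unfold prob
  rw [Fintype.card_congr e]
  congr 2
  apply Finset.card_bij (fun a _ => e a)
  · intro a ha; simp_all
  · intro a ha b hb hab; exact e.injective hab
  · intro b hb; exact ⟨e.symm b, by simp_all, by simp⟩

lemma prob_pos_exists {P : Ω → Prop} (h : 0 < prob P) : ∃ x, P x := by
  by_contra hc
  push_neg at hc
  have : Finset.univ.filter P = ∅ := Finset.filter_eq_empty_iff.mpr (fun {x} _ => hc x)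
  rw [prob, this] at h
  simp at h

end ProbLemmas

section ProductLemmas
variable {A B : Type*} [Fintype A] [Fintype B]

lemma card_filter_prod (P : A × B → Prop) :
    (Finset.univ.filter P).card
      = ∑ a : A, (Finset.univ.filter (fun b => P (a, b))).card := by
  rw [Finset.card_filter, Fintype.sum_prod_type]
  exact Finset.sum_congr rfl fun a _ => (Finset.card_filter _ _).symm

lemma exists_mode {G V : Type*} [Fintype G] [Nonempty G] (h : G → V) :
    ∃ v, prob (fun bc : G × G => h bc.1 = h bc.2) ≤ prob (fun b => h b = v) := by
  obtain ⟨b₀, -, hb₀⟩ := Finset.exists_max_image Finset.univ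
      (fun b => (Finset.univ.filter (fun c => h c = h b)).card) Finset.univ_nonempty
  refine ⟨h b₀, ?_⟩
  unfold prob
  rw [card_filter_prod, Fintype.card_prod]
  set N := Fintype.card G with hN
  have hNpos : (0:ℝ) < N := by exact_mod_cast Fintype.card_pos
  have hsum : (∑ a : G, (Finset.univ.filter (fun b => h a = h b)).card)
      ≤ N * (Finset.univ.filter (fun b => h b = h b₀)).card := by
    calc ∑ a : G, (Finset.univ.filter (fun b => h a = h b)).card
        ≤ ∑ _a : G, (Finset.univ.filter (fun c => h c = h b₀)).card := by
          apply Finset.sum_le_sum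
          intro a _
          have := hb₀ a (Finset.mem_univ a)
          simpa [eq_comm] using this
      _ = N * (Finset.univ.filter (fun b => h b = h b₀)).card := by
          rw [Finset.sum_const, Finset.card_univ, smul_eq_mul]
  calc ((∑ a : G, (Finset.univ.filter (fun b => h a = h b)).card : ℕ) : ℝ) / (N * N : ℕ)
      ≤ ((N * (Finset.univ.filter (fun b => h b = h b₀)).card : ℕ) : ℝ) / (N * N : ℕ) :=
        div_le_div_card hsum _
    _ = ((Finset.univ.filter (fun b => h b = h b₀)).card : ℝ) / N := by
        push_cast
        rw [mul_div_mul_left _ _ hNpos.ne']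

lemma prob_prod_ge [Nonempty A] [Nonempty B]
    (Q : A → Prop) (R : A → B → Prop) {c : ℝ} (hc : 0 ≤ c)
    (h : ∀ a, Q a → c ≤ prob (R a)) :
    prob Q * c ≤ prob (fun ab : A × B => Q ab.1 ∧ R ab.1 ab.2) := by
  have hNA : (0:ℝ) < Fintype.card A := by exact_mod_cast Fintype.card_pos
  have hNB : (0:ℝ) < Fintype.card B := by exact_mod_cast Fintype.card_pos
  unfold prob
  rw [Fintype.card_prod, card_filter_prod]
  simp only [Finset.filter_congr_decidable]
  have h2 : ((Finset.univ.filter Q).card : ℝ) * (c * Fintype.card B)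
      ≤ ((∑ a : A, (Finset.univ.filter (fun b => Q a ∧ R a b)).card : ℕ) : ℝ) := by
    push_cast
    calc ((Finset.univ.filter Q).card : ℝ) * (c * Fintype.card B)
        = ∑ _a ∈ Finset.univ.filter Q, (c * (Fintype.card B : ℝ)) := by
          rw [Finset.sum_const, nsmul_eq_mul]
      _ ≤ ∑ a ∈ Finset.univ.filter Q, ((Finset.univ.filter (fun b => Q a ∧ R a b)).card : ℝ) := by
          apply Finset.sum_le_sum
          intro a ha
          have hQ : Q a := (Finset.mem_filter.mp ha).2
          have hp := h a hQ
          rw [prob, le_div_iff₀ hNB] at hp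
          refine hp.trans ?_
          have hle : (Finset.univ.filter (R a)).card
              ≤ (Finset.univ.filter (fun b => Q a ∧ R a b)).card := by
            apply Finset.card_le_card
            intro b hb
            simp only [Finset.mem_filter, Finset.mem_univ, true_and] at *
            exact ⟨hQ, hb⟩
          exact_mod_cast hle
      _ ≤ ∑ a : A, ((Finset.univ.filter (fun b => Q a ∧ R a b)).card : ℝ) :=
          Finset.sum_le_sum_of_subset_of_nonneg (Finset.filter_subset _ _)
            (fun _ _ _ => by positivity)
  have h3 : ((Finset.univ.filter Q).card : ℝ) / (Fintype.card A : ℝ) * c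
      ≤ ((∑ a : A, (Finset.univ.filter (fun b => Q a ∧ R a b)).card : ℕ) : ℝ)
          / ((Fintype.card A * Fintype.card B : ℕ) : ℝ) := by
    calc ((Finset.univ.filter Q).card : ℝ) / (Fintype.card A : ℝ) * c
        = (((Finset.univ.filter Q).card : ℝ) * (c * Fintype.card B))
            / ((Fintype.card A : ℝ) * Fintype.card B) := by
          field_simp
      _ ≤ ((∑ a : A, (Finset.univ.filter (fun b => Q a ∧ R a b)).card : ℕ) : ℝ)
            / ((Fintype.card A : ℝ) * Fintype.card B) :=
          div_le_div_of_nonneg_right h2 (by positivity)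
      _ = ((∑ a : A, (Finset.univ.filter (fun b => Q a ∧ R a b)).card : ℕ) : ℝ)
            / ((Fintype.card A * Fintype.card B : ℕ) : ℝ) := by
          push_cast
          ring
  refine h3.trans (le_of_eq ?_)
  congr 2

end ProductLemmas

/-- **BLR linearity test soundness** over a finite field `F`: if `w : F^k → F^d`
passes the BLR test with probability at least `1 - ε`, then `w` is `6ε`-close
to an additive function `w* : F^k → F^d`. -/
theorem blr_soundness {F : Type*} [Field F] [Fintype F]
    {k d : ℕ} (hk : 1 ≤ k) (hd : 1 ≤ d) {ε : ℝ} (hε : 0 ≤ ε)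
    (w : (Fin k → F) → (Fin d → F))
    (h : prob (fun x : (Fin k → F) × (Fin k → F) =>
        w x.1 + w x.2 = w (x.1 + x.2)) ≥ 1 - ε) :
    ∃ wstar : (Fin k → F) → (Fin d → F),
      (∀ a b : Fin k → F, wstar (a + b) = wstar a + wstar b) ∧
      rdist w wstar ≤ 6 * ε := by
  by_cases hbig : (1:ℝ)/6 ≤ ε
  · refine ⟨0, fun a b => by simp, ?_⟩
    calc rdist w 0 ≤ 1 := prob_le_one _
      _ ≤ 6 * ε := by linarith
  push_neg at hbig
  set δ := prob (fun x : (Fin k → F) × (Fin k → F) => ¬ (w x.1 + w x.2 = w (x.1 + x.2))) with hδdef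
  have hδ : δ = 1 - prob (fun x : (Fin k → F) × (Fin k → F) => w x.1 + w x.2 = w (x.1 + x.2)) := prob_compl _
  have hδε : δ ≤ ε := by rw [hδ]; linarith [h]
  have hδ0 : 0 ≤ δ := prob_nonneg _
  have hδ6 : δ < 1/6 := lt_of_le_of_lt hδε hbig
  -- translation invariance
  have trans1 : ∀ x : (Fin k → F),
      prob (fun bc : (Fin k → F) × (Fin k → F) => ¬ (w (x + bc.1) + w bc.2 = w (x + bc.1 + bc.2))) = δ := by
    intro x
    rw [hδdef]
    exact prob_equiv ((Equiv.addLeft x).prodCongr (Equiv.refl (Fin k → F)))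
      (fun y : (Fin k → F) × (Fin k → F) => ¬ (w y.1 + w y.2 = w (y.1 + y.2)))
  have trans2 : ∀ x : (Fin k → F),
      prob (fun bc : (Fin k → F) × (Fin k → F) => ¬ (w (x + bc.2) + w bc.1 = w (x + bc.2 + bc.1))) = δ := by
    intro x
    rw [hδdef]
    exact prob_equiv ((Equiv.prodComm (Fin k → F) (Fin k → F)).trans ((Equiv.addLeft x).prodCongr (Equiv.refl (Fin k → F))))
      (fun y : (Fin k → F) × (Fin k → F) => ¬ (w y.1 + w y.2 = w (y.1 + y.2)))
  -- majority decoding: for every x there is a value agreeing with prob ≥ 1 - 2δ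
  have hmode : ∀ x : (Fin k → F), ∃ v, 1 - 2*δ ≤ prob (fun b : (Fin k → F) => w (x + b) - w b = v) := by
    intro x
    obtain ⟨v, hv⟩ := exists_mode (fun b : (Fin k → F) => w (x + b) - w b)
    refine ⟨v, le_trans ?_ hv⟩
    have hcompl : prob (fun bc : (Fin k → F) × (Fin k → F) =>
        ¬ (w (x + bc.1) - w bc.1 = w (x + bc.2) - w bc.2))
        = 1 - prob (fun bc : (Fin k → F) × (Fin k → F) => w (x + bc.1) - w bc.1 = w (x + bc.2) - w bc.2) :=
      prob_compl _
    have hunion : prob (fun bc : (Fin k → F) × (Fin k → F) =>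
        ¬ (w (x + bc.1) - w bc.1 = w (x + bc.2) - w bc.2)) ≤ 2*δ := by
      have step : prob (fun bc : (Fin k → F) × (Fin k → F) =>
          ¬ (w (x + bc.1) - w bc.1 = w (x + bc.2) - w bc.2))
          ≤ prob (fun bc : (Fin k → F) × (Fin k → F) =>
              (¬ (w (x + bc.1) + w bc.2 = w (x + bc.1 + bc.2))) ∨
              (¬ (w (x + bc.2) + w bc.1 = w (x + bc.2 + bc.1)))) := by
        apply prob_mono
        intro bc hne
        by_contra hor
        push_neg at hor
        obtain ⟨e1, e2⟩ := hor
        apply hne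
        have e3 : w (x + bc.1 + bc.2) = w (x + bc.2 + bc.1) := by
          congr 1; ring
        linear_combination e1 - e2 + e3
      refine step.trans ?_
      refine (prob_union_le _ _).trans ?_
      rw [trans1 x, trans2 x]
      linarith
    linarith [hcompl, hunion]
  choose g hg using hmode
  have hc0 : (0:ℝ) ≤ 1 - 2*δ := by linarith
  -- g is additive
  have hadd : ∀ x y : (Fin k → F), g (x + y) = g x + g y := by
    intro x y
    have hA : 1 - 2*δ ≤ prob (fun b : (Fin k → F) => w (x + b) - w b = g x) := hg x
    have hB : 1 - 2*δ ≤ prob (fun b : (Fin k → F) => w (y + (x + b)) - w (x + b) = g y) := by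
      calc (1 : ℝ) - 2*δ ≤ prob (fun b : (Fin k → F) => w (y + b) - w b = g y) := hg y
        _ = prob (fun b : (Fin k → F) => w (y + (x + b)) - w (x + b) = g y) :=
            (prob_equiv (Equiv.addLeft x) (fun b : (Fin k → F) => w (y + b) - w b = g y)).symm
    have hC : 1 - 2*δ ≤ prob (fun b : (Fin k → F) => w (x + y + b) - w b = g (x + y)) := hg (x + y)
    have hpos : 0 < prob (fun b : (Fin k → F) =>
        (w (x + b) - w b = g x) ∧ (w (y + (x + b)) - w (x + b) = g y) ∧
        (w (x + y + b) - w b = g (x + y))) := by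
      have hcompl3 : prob (fun b : (Fin k → F) => ¬ ((w (x + b) - w b = g x) ∧
          (w (y + (x + b)) - w (x + b) = g y) ∧ (w (x + y + b) - w b = g (x + y))))
          ≤ prob (fun b : (Fin k → F) => (¬ (w (x + b) - w b = g x)) ∨
            ((¬ (w (y + (x + b)) - w (x + b) = g y)) ∨
             (¬ (w (x + y + b) - w b = g (x + y))))) := by
        apply prob_mono; intro b hb; tauto
      have hu : prob (fun b : (Fin k → F) => (¬ (w (x + b) - w b = g x)) ∨
            ((¬ (w (y + (x + b)) - w (x + b) = g y)) ∨
             (¬ (w (x + y + b) - w b = g (x + y)))))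
          ≤ prob (fun b : (Fin k → F) => ¬ (w (x + b) - w b = g x))
            + (prob (fun b : (Fin k → F) => ¬ (w (y + (x + b)) - w (x + b) = g y))
              + prob (fun b : (Fin k → F) => ¬ (w (x + y + b) - w b = g (x + y)))) :=
        (prob_union_le _ _).trans (by gcongr; exact prob_union_le _ _)
      have c1 := prob_compl (fun b : (Fin k → F) => w (x + b) - w b = g x)
      have c2 := prob_compl (fun b : (Fin k → F) => w (y + (x + b)) - w (x + b) = g y)
      have c3 := prob_compl (fun b : (Fin k → F) => w (x + y + b) - w b = g (x + y))
      have call := prob_compl (fun b : (Fin k → F) => (w (x + b) - w b = g x) ∧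
          (w (y + (x + b)) - w (x + b) = g y) ∧ (w (x + y + b) - w b = g (x + y)))
      have h6 : (0:ℝ) < 1 - 6*δ := by linarith
      linarith
    obtain ⟨b, hbA, hbB, hbC⟩ := prob_pos_exists hpos
    have e3 : w (x + y + b) = w (y + (x + b)) := by congr 1; ring
    linear_combination hbA + hbB - hbC + e3
  refine ⟨g, hadd, ?_⟩
  -- distance bound
  have hkey : rdist w g * (1 - 2*δ)
      ≤ prob (fun xb : (Fin k → F) × (Fin k → F) => (w xb.1 ≠ g xb.1) ∧ (w (xb.1 + xb.2) - w xb.2 = g xb.1)) := by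
    rw [rdist]
    exact prob_prod_ge (fun a => w a ≠ g a)
      (fun a b => w (a + b) - w b = g a) hc0 (fun a _ => hg a)
  have hsub : prob (fun xb : (Fin k → F) × (Fin k → F) => (w xb.1 ≠ g xb.1) ∧ (w (xb.1 + xb.2) - w xb.2 = g xb.1))
      ≤ δ := by
    rw [hδdef]
    apply prob_mono
    rintro ⟨a, b⟩ ⟨hne, heq⟩ hpass
    exact hne (by linear_combination hpass + heq)
  have hΔ0 : 0 ≤ rdist w g := prob_nonneg _
  nlinarith [hkey, hsub, hΔ0, hδ0, hδ6, hδε, hε]
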